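/- arXiv:1911.07213 — 2 statements merged into one kernel-verified Lean document; each statement's English description precedes it below -/
import Mathlib

section
/- Let G = (V,E) be an undirected simple graph on V = {1,…,n} and let C_1,…,C_N ⊆ V be such that for every pair (h,k) ∈ Ē there is some i with h ∈ C_i and k ∈ C_i. Then for every C ∈ S^n(E) there exist symmetric matrices C_i ∈ S^{|C_i|}, i = 1,…,N, such that ⟨C, Q⟩ = Σ_{i=1}^N ⟨C_i, Q_{C_i}⟩ for all Q ∈ S^n(E), where Q_{C_i} = P_{C_i} Q P_{C_i}ᵀ. -/
open Matrix

/-- `X` has the sparsity pattern of the graph `G`: every off-diagonal entry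
indexed by a non-edge vanishes. -/
def HasSparsity {n : ℕ} (G : SimpleGraph (Fin n)) (X : Matrix (Fin n) (Fin n) ℝ) : Prop :=
  ∀ i j : Fin n, i ≠ j → ¬ G.Adj i j → X i j = 0

/-- The `|C| × n` entry-selection matrix `P_C`: `[P_C]_{h,k} = 1` iff `k` is the
`h`-th smallest element of `C`. -/
def selMat {n : ℕ} (C : Finset (Fin n)) : Matrix (Fin C.card) (Fin n) ℝ :=
  Matrix.of fun h k => if ((C.orderIsoOfFin rfl h : C) : Fin n) = k then 1 else 0

/-- The map `Fin C.card → Fin n` selecting elements of `C` in order. -/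
def selFun {n : ℕ} (C : Finset (Fin n)) (a : Fin C.card) : Fin n :=
  ((C.orderIsoOfFin rfl a : C) : Fin n)

lemma selMat_conj {n : ℕ} (C : Finset (Fin n)) (Q : Matrix (Fin n) (Fin n) ℝ)
    (a b : Fin C.card) :
    (selMat C * Q * (selMat C)ᵀ) a b = Q (selFun C a) (selFun C b) := by
  simp [Matrix.mul_apply, selMat, selFun, Matrix.transpose_apply, ite_mul, mul_ite,
    Finset.sum_ite_eq, Finset.sum_ite_eq', -Finset.coe_orderIsoOfFin_apply]

lemma sum_selFun {n : ℕ} (C : Finset (Fin n)) (g : Fin n → ℝ) :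
    ∑ a : Fin C.card, g (selFun C a) = ∑ h ∈ C, g h := by
  rw [← Finset.sum_coe_sort C g]
  exact Fintype.sum_equiv (C.orderIsoOfFin rfl).toEquiv _ _ (fun a => rfl)

/-- If the index sets `C_1, …, C_N` cover every pair of `Ē`, then every
`C ∈ S^n(E)` admits a decomposition of its trace inner product with all
`Q ∈ S^n(E)` through the principal submatrices `Q_{C_i}`. -/
theorem cost_decomposition_exists {n N : ℕ} (G : SimpleGraph (Fin n))
    (Cs : Fin N → Finset (Fin n))
    (hcover : ∀ h k : Fin n, (h = k ∨ G.Adj h k) → ∃ i, h ∈ Cs i ∧ k ∈ Cs i)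
    (C : Matrix (Fin n) (Fin n) ℝ) (hCsymm : C.IsSymm) (hCsp : HasSparsity G C) :
    ∃ Ci : (i : Fin N) → Matrix (Fin (Cs i).card) (Fin (Cs i).card) ℝ,
      (∀ i, (Ci i).IsSymm) ∧
      ∀ Q : Matrix (Fin n) (Fin n) ℝ, Q.IsSymm → HasSparsity G Q →
        (C * Q).trace = ∑ i, (Ci i * (selMat (Cs i) * Q * (selMat (Cs i))ᵀ)).trace := by
  classical
  set pick : Fin n → Fin n → Option (Fin N) := fun h k =>
    if hc : h = k ∨ G.Adj h k then some (hcover h k hc).choose else none with hpick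
  set w : Fin N → Fin n → Fin n → ℝ := fun i h k =>
    if pick h k = some i then C h k else 0 with hwdef
  have hw_mem : ∀ i h k, w i h k ≠ 0 → h ∈ Cs i ∧ k ∈ Cs i := by
    intro i h k hne
    by_cases hp : pick h k = some i
    · simp only [hpick] at hp
      by_cases hc : h = k ∨ G.Adj h k
      · rw [dif_pos hc] at hp
        have hs := (hcover h k hc).choose_spec
        have : (hcover h k hc).choose = i := Option.some_inj.mp hp
        rwa [this] at hs
      · rw [dif_neg hc] at hp; exact absurd hp (by simp)
    · exact absurd (by simp [hwdef, hp]) hne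
  have hw_sum : ∀ h k, ∑ i, w i h k = C h k := by
    intro h k
    simp only [hwdef]
    by_cases hc : h = k ∨ G.Adj h k
    · have : pick h k = some (hcover h k hc).choose := by simp [hpick, hc]
      rw [Finset.sum_eq_single (hcover h k hc).choose]
      · simp [this]
      · intro i _ hi
        rw [if_neg]
        simp [this, Ne.symm hi]
      · simp
    · have hC0 : C h k = 0 := by
        push_neg at hc
        exact hCsp h k hc.1 hc.2
      have : pick h k = none := by simp [hpick, hc]
      simp [this, hC0]
  refine ⟨fun i => Matrix.of fun a b =>
    (w i (selFun (Cs i) a) (selFun (Cs i) b) + w i (selFun (Cs i) b) (selFun (Cs i) a)) / 2,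
    ?_, ?_⟩
  · intro i
    ext a b
    simp [Matrix.transpose_apply, add_comm]
  · intro Q hQsymm hQsp
    have hQ : ∀ h k, Q k h = Q h k := fun h k => by
      conv_lhs => rw [← hQsymm]
      rfl
    have htr : ∀ i, (Matrix.of (fun a b =>
        (w i (selFun (Cs i) a) (selFun (Cs i) b) + w i (selFun (Cs i) b) (selFun (Cs i) a)) / 2)
          * (selMat (Cs i) * Q * (selMat (Cs i))ᵀ)).trace
        = ∑ h : Fin n, ∑ k : Fin n, ((w i h k + w i k h) / 2) * Q k h := by
      intro i
      simp only [Matrix.trace, Matrix.diag, Matrix.mul_apply]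
      have step1 : ∀ a b : Fin (Cs i).card,
          (Matrix.of (fun a b => (w i (selFun (Cs i) a) (selFun (Cs i) b)
              + w i (selFun (Cs i) b) (selFun (Cs i) a)) / 2)) a b
            * (selMat (Cs i) * Q * (selMat (Cs i))ᵀ) b a
          = ((w i (selFun (Cs i) a) (selFun (Cs i) b)
              + w i (selFun (Cs i) b) (selFun (Cs i) a)) / 2)
              * Q (selFun (Cs i) b) (selFun (Cs i) a) := by
        intro a b
        rw [selMat_conj]
        rfl
      calc ∑ a, ∑ b, (Matrix.of (fun a b => (w i (selFun (Cs i) a) (selFun (Cs i) b)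
              + w i (selFun (Cs i) b) (selFun (Cs i) a)) / 2)) a b
            * (selMat (Cs i) * Q * (selMat (Cs i))ᵀ) b a
          = ∑ a, ∑ b, ((w i (selFun (Cs i) a) (selFun (Cs i) b)
              + w i (selFun (Cs i) b) (selFun (Cs i) a)) / 2)
              * Q (selFun (Cs i) b) (selFun (Cs i) a) := by
            exact Finset.sum_congr rfl fun a _ => Finset.sum_congr rfl fun b _ => step1 a b
        _ = ∑ h ∈ Cs i, ∑ k ∈ Cs i, ((w i h k + w i k h) / 2) * Q k h := by
            rw [← sum_selFun (Cs i) (fun h => ∑ k ∈ Cs i, ((w i h k + w i k h) / 2) * Q k h)]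
            exact Finset.sum_congr rfl fun a _ =>
              sum_selFun (Cs i) (fun k => ((w i (selFun (Cs i) a) k
                + w i k (selFun (Cs i) a)) / 2) * Q k (selFun (Cs i) a))
        _ = ∑ h : Fin n, ∑ k : Fin n, ((w i h k + w i k h) / 2) * Q k h := by
            rw [Finset.sum_subset (Finset.subset_univ (Cs i))]
            · exact Finset.sum_congr rfl fun h _ => by
                rw [Finset.sum_subset (Finset.subset_univ (Cs i))]
                intro k _ hk
                have h1 : w i h k = 0 := by
                  by_contra hne; exact hk (hw_mem i h k hne).2
                have h2 : w i k h = 0 := by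
                  by_contra hne; exact hk (hw_mem i k h hne).1
                simp [h1, h2]
            · intro h _ hh
              refine Finset.sum_eq_zero fun k _ => ?_
              have h1 : w i h k = 0 := by
                by_contra hne; exact hh (hw_mem i h k hne).1
              have h2 : w i k h = 0 := by
                by_contra hne; exact hh (hw_mem i k h hne).2
              simp [h1, h2]
    rw [Finset.sum_congr rfl (fun i _ => htr i), Finset.sum_comm]
    have hC : ∀ h k, C k h = C h k := fun h k => by
      conv_lhs => rw [← hCsymm]
      rfl
    simp only [Matrix.trace, Matrix.diag, Matrix.mul_apply]
    refine Finset.sum_congr rfl fun h _ => ?_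
    rw [Finset.sum_comm]
    refine Finset.sum_congr rfl fun k _ => ?_
    rw [← Finset.sum_mul, ← Finset.sum_div, Finset.sum_add_distrib, hw_sum, hw_sum, hC h k]
    ring
end

section
/- (Clique-tree conversion preserves the SDP.) Let G = (V,E) be a chordal undirected simple graph on V = {1,…,n} with C_1,…,C_N the set of all cliques of G, and assume every pair (h,k) ∈ Ē satisfies h, k ∈ C_i for some i. Let C, A_1,…,A_m ∈ S^n(E), b ∈ R^m, and let C_i ∈ S^{|C_i|} and A_{k,i} ∈ S^{|C_i|} satisfy ⟨C, Q⟩ = Σ_{i=1}^N ⟨C_i, Q_{C_i}⟩ and ⟨A_k, Q⟩ = Σ_{i=1}^N ⟨A_{k,i}, Q_{C_i}⟩ for all Q ∈ S^n(E) and all k ∈ {1,…,m}. Then the achieved objective values of the original SDP and of its decomposition coincide: {⟨C, X⟩ : X ∈ S^n_{⪰0}, ⟨A_k, X⟩ = b_k ∀k} = {Σ_{i=1}^N ⟨C_i, X_i⟩ : X_i ∈ S^{|C_i|}_{⪰0} ∀i, Σ_{i=1}^N ⟨A_{k,i}, X_i⟩ = b_k ∀k, and P_{C_i∩C_j}(P_{C_i}ᵀ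 X_i P_{C_i} − P_{C_j}ᵀ X_j P_{C_j})P_{C_i∩C_j}ᵀ = 0 ∀i,j}. In particular the two problems have the same optimal value. -/
open Matrix

/-- A clique of `G`: a maximal complete set of vertices. -/
def IsMaxClique {n : ℕ} (G : SimpleGraph (Fin n)) (s : Finset (Fin n)) : Prop :=
  G.IsClique (↑s : Set (Fin n)) ∧
    ∀ t : Finset (Fin n), G.IsClique (↑t : Set (Fin n)) → s ⊆ t → s = t

/-- `G` is chordal: every cycle of length greater than three has a chord, i.e. an
edge of `G` joining two vertices of the cycle that is not an edge of the cycle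
(equivalently, joining two nonconsecutive vertices of the cycle). -/
def IsChordal {n : ℕ} (G : SimpleGraph (Fin n)) : Prop :=
  ∀ (v : Fin n) (c : G.Walk v v), c.IsCycle → 3 < c.length →
    ∃ u w : Fin n, u ∈ c.support ∧ w ∈ c.support ∧ G.Adj u w ∧ s(u, w) ∉ c.edges


set_option linter.unusedSectionVars false
set_option linter.unusedVariables false
set_option maxHeartbeats 1000000

open scoped RealInnerProductSpace

/-- general-vertex-type version of `IsChordal`. -/
def Chordal' {V : Type} (G : SimpleGraph V) : Prop :=
  ∀ (v : V) (c : G.Walk v v), c.IsCycle → 3 < c.length →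
    ∃ u w : V, u ∈ c.support ∧ w ∈ c.support ∧ G.Adj u w ∧ s(u, w) ∉ c.edges

section Graphs
variable {V : Type} [Fintype V] [DecidableEq V]



lemma chordal'_induce {G : SimpleGraph V} (hG : Chordal' G) (s : Set V) :
    Chordal' (G.induce s) := by
  intro v c hc hl
  have hinj : Function.Injective (SimpleGraph.Embedding.induce (G := G) s).toHom :=
    Subtype.val_injective
  have hc' : (c.map (SimpleGraph.Embedding.induce (G := G) s).toHom).IsCycle :=
    (SimpleGraph.Walk.map_isCycle_iff_of_injective hinj).2 hc
  have hl' : 3 < (c.map (SimpleGraph.Embedding.induce (G := G) s).toHom).length := by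
    rwa [SimpleGraph.Walk.length_map]
  obtain ⟨u, w, hu, hw, ha, he⟩ := hG _ _ hc' hl'
  rw [SimpleGraph.Walk.support_map, List.mem_map] at hu hw
  obtain ⟨u', hu', rfl⟩ := hu
  obtain ⟨w', hw', rfl⟩ := hw
  refine ⟨u', w', hu', hw', ha, fun hmem => he ?_⟩
  rw [SimpleGraph.Walk.edges_map]
  exact List.mem_map.2 ⟨s(u', w'), hmem, rfl⟩

/-- a length-one walk uses exactly the edge between its endpoints -/
lemma length_one_edge {G : SimpleGraph V} {u w : V} (p : G.Walk u w)
    (h : p.length = 1) : s(u, w) ∈ p.edges := by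
  cases p with
  | nil => simp at h
  | cons ha q =>
    cases q with
    | nil => simp
    | cons hb r => simp [SimpleGraph.Walk.length_cons] at h

/-- shortcut auxiliary: an edge from the junction point into the second leg shortens a walk. -/
lemma shortcut_aux {G : SimpleGraph V} {x y u w : V}
    (t : G.Walk x u) (d : G.Walk u y) (hw : w ∈ d.support) (ha : G.Adj u w)
    (he : s(u, w) ∉ (t.append d).edges) :
    ∃ q : G.Walk x y, q.length < (t.append d).length ∧ ∀ z ∈ q.support, z ∈ (t.append d).support := by
  classical
  set d1 := d.takeUntil w hw with hd1
  set d2 := d.dropUntil w hw with hd2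
  have hspec : d1.append d2 = d := d.take_spec hw
  have hlen : d1.length + d2.length = d.length := by
    rw [← SimpleGraph.Walk.length_append, hspec]
  have hd1len : 2 ≤ d1.length := by
    rcases Nat.lt_or_ge d1.length 2 with h2 | h2
    · interval_cases h : d1.length
      · exact absurd (SimpleGraph.Walk.eq_of_length_eq_zero h) ha.ne
      · exfalso
        apply he
        rw [SimpleGraph.Walk.edges_append]
        refine List.mem_append.2 (Or.inr ?_)
        rw [← hspec, SimpleGraph.Walk.edges_append]
        exact List.mem_append.2 (Or.inl (length_one_edge _ h))
    · exact h2
  refine ⟨t.append (SimpleGraph.Walk.cons ha d2), ?_, ?_⟩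
  · rw [SimpleGraph.Walk.length_append, SimpleGraph.Walk.length_append,
      SimpleGraph.Walk.length_cons, ← hlen]
    omega
  · intro z hz
    rw [SimpleGraph.Walk.mem_support_append_iff] at hz
    rcases hz with hz | hz
    · rw [SimpleGraph.Walk.mem_support_append_iff]; exact Or.inl hz
    · rw [SimpleGraph.Walk.support_cons, List.mem_cons] at hz
      rcases hz with rfl | hz
      · rw [SimpleGraph.Walk.mem_support_append_iff]
        exact Or.inl (SimpleGraph.Walk.end_mem_support t)
      · rw [SimpleGraph.Walk.mem_support_append_iff]
        refine Or.inr ?_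
        have : z ∈ d.support := SimpleGraph.Walk.support_dropUntil_subset d hw hz
        exact this

/-- a chord of a walk yields a strictly shorter walk within the same support. -/
lemma shortcut {G : SimpleGraph V} {x y u w : V} (p : G.Walk x y)
    (hu : u ∈ p.support) (hw : w ∈ p.support) (ha : G.Adj u w)
    (he : s(u, w) ∉ p.edges) :
    ∃ q : G.Walk x y, q.length < p.length ∧ ∀ z ∈ q.support, z ∈ p.support := by
  classical
  set t := p.takeUntil u hu with ht
  set d := p.dropUntil u hu with hd
  have hspec : t.append d = p := p.take_spec hu
  have hw' : w ∈ t.support ∨ w ∈ d.support := by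
    rw [← SimpleGraph.Walk.mem_support_append_iff, hspec]; exact hw
  rcases hw' with hw' | hw'
  · -- w occurs before u: cut t at w
    set t1 := t.takeUntil w hw' with ht1
    set t2 := t.dropUntil w hw' with ht2
    have hspec2 : t1.append t2 = t := t.take_spec hw'
    have hu2 : u ∈ (t2.append d).support := by
      rw [SimpleGraph.Walk.mem_support_append_iff]
      exact Or.inl (SimpleGraph.Walk.end_mem_support t2)
    have hep : t1.append (t2.append d) = p := by
      rw [SimpleGraph.Walk.append_assoc, hspec2, hspec]
    have he' : s(w, u) ∉ (t1.append (t2.append d)).edges := by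
      rw [hep, Sym2.eq_swap]; exact he
    obtain ⟨q, hq1, hq2⟩ := shortcut_aux t1 (t2.append d) hu2 ha.symm he'
    rw [hep] at hq1 hq2
    exact ⟨q, hq1, hq2⟩
  · have he' : s(u, w) ∉ (t.append d).edges := by rw [hspec]; exact he
    obtain ⟨q, hq1, hq2⟩ := shortcut_aux t d hw' ha he'
    rw [hspec] at hq1 hq2
    exact ⟨q, hq1, hq2⟩


/-- The graph `G` with all edges meeting `S` removed. -/
def outside (G : SimpleGraph V) (S : Set V) : SimpleGraph V where
  Adj u w := G.Adj u w ∧ u ∉ S ∧ w ∉ S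
  symm := ⟨fun u w ⟨h, hu, hw⟩ => ⟨h.symm, hw, hu⟩⟩
  loopless := ⟨fun u h => G.loopless.irrefl u h.1⟩

lemma outside_adj {G : SimpleGraph V} {S : Set V} {u w : V} :
    (outside G S).Adj u w ↔ G.Adj u w ∧ u ∉ S ∧ w ∉ S := Iff.rfl

omit [Fintype V] [DecidableEq V] in
lemma reachable_outside_not_mem {G : SimpleGraph V} {S : Set V} {a z : V}
    (h : (outside G S).Reachable a z) (ha : a ∉ S) : z ∉ S := by
  obtain ⟨p⟩ := h
  induction p with
  | nil => exact ha
  | cons h q ih => exact ih h.2.2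

omit [Fintype V] [DecidableEq V] in
lemma transfer_outside {G : SimpleGraph V} {S : Set V} {u w : V}
    (p : (outside G S).Walk u w) : ∀ e ∈ p.edges, e ∈ G.edgeSet := by
  intro e he
  induction e with
  | _ a b => exact (p.adj_of_mem_edges he).1

def sep' (G : SimpleGraph V) (a b : V) (S : Finset V) : Prop :=
  a ∉ S ∧ b ∉ S ∧ ¬ (outside G ↑S).Reachable a b

lemma sep'_comm {G : SimpleGraph V} {a b : V} {S : Finset V} :
    sep' G a b S ↔ sep' G b a S := by
  unfold sep'
  constructor <;> rintro ⟨h1, h2, h3⟩ <;> exact ⟨h2, h1, fun hr => h3 hr.symm⟩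

lemma base_sep {G : SimpleGraph V} {a b : V} (hab : a ≠ b) (hnadj : ¬ G.Adj a b) :
    sep' G a b (Finset.univ \ {a, b}) := by
  refine ⟨by simp, by simp, ?_⟩
  rintro ⟨p⟩
  cases p with
  | nil => exact hab rfl
  | cons h q =>
    rename_i c
    have hc : c ∉ (↑(Finset.univ \ ({a, b} : Finset V)) : Set V) := h.2.2
    simp only [Finset.coe_sdiff, Finset.coe_univ, Finset.coe_insert, Finset.coe_singleton,
      Set.mem_diff, Set.mem_univ, true_and, not_not, Set.mem_insert_iff,
      Set.mem_singleton_iff] at hc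
    rcases hc with rfl | rfl
    · exact h.1.ne rfl
    · exact hnadj h.1

lemma exists_min_sep {G : SimpleGraph V} {a b : V} (h : ∃ S, sep' G a b S) :
    ∃ S, sep' G a b S ∧ ∀ x ∈ S, ¬ sep' G a b (S.erase x) := by
  classical
  obtain ⟨S0, hS0⟩ := h
  obtain ⟨S, hSmem, hSmin⟩ := Finset.exists_min_image
    ((Finset.univ : Finset (Finset V)).filter (fun T => sep' G a b T)) Finset.card
    ⟨S0, by simp [hS0]⟩
  simp only [Finset.mem_filter, Finset.mem_univ, true_and] at hSmem
  refine ⟨S, hSmem, fun x hx hsep => ?_⟩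
  have := hSmin (S.erase x) (by simp [hsep])
  have hlt : (S.erase x).card < S.card := Finset.card_erase_lt_of_mem hx
  omega

/-- From minimality: every separator vertex has a neighbor in the component of `a`. -/
lemma nbr_in_comp {G : SimpleGraph V} {a b : V} {S : Finset V}
    (hsep : sep' G a b S) (hmin : ∀ x ∈ S, ¬ sep' G a b (S.erase x))
    {x : V} (hx : x ∈ S) :
    ∃ u, G.Adj x u ∧ u ∉ (↑S : Set V) ∧ (outside G ↑S).Reachable a u := by
  classical
  obtain ⟨ha, hb, hnr⟩ := hsep
  have herase : ∀ z, z ∉ S → z ∉ S.erase x := fun z hz h => hz (Finset.mem_of_mem_erase h)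
  have hreach : (outside G ↑(S.erase x)).Reachable a b := by
    by_contra hr
    exact hmin x hx ⟨herase a ha, herase b hb, hr⟩
  obtain ⟨p0⟩ := hreach
  set p := p0.bypass with hp
  have hpath : p.IsPath := p0.bypass_isPath
  have hnotmem : ∀ z ∈ p.support, z ∉ (↑(S.erase x) : Set V) → z ≠ x → z ∉ (↑S : Set V) := by
    intro z _ hz hzx hzS
    exact hz (Finset.mem_coe.2 (Finset.mem_erase.2 ⟨hzx, Finset.mem_coe.1 hzS⟩))
  have hxp : x ∈ p.support := by
    by_contra hxp
    apply hnr
    refine ⟨p.transfer (outside G ↑S) ?_⟩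
    intro e he
    induction e with
    | _ c d =>
      have hadj := p.adj_of_mem_edges he
      have hc := p.fst_mem_support_of_mem_edges he
      have hd := p.snd_mem_support_of_mem_edges he
      exact ⟨hadj.1, hnotmem c hc hadj.2.1 (fun h => hxp (h ▸ hc)),
        hnotmem d hd hadj.2.2 (fun h => hxp (h ▸ hd))⟩
  set t := p.takeUntil x hxp with ht
  have hxa : x ≠ a := fun h => ha (h ▸ hx)
  obtain ⟨c, hadj, q, hq⟩ := SimpleGraph.Walk.exists_eq_cons_of_ne hxa t.reverse
  have hcount : List.count x t.support = 1 := p.count_support_takeUntil_eq_one hxp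
  have hxq : x ∉ q.support := by
    have h1 : List.count x t.reverse.support = 1 := by
      rw [SimpleGraph.Walk.support_reverse, List.count_reverse]; exact hcount
    rw [hq, SimpleGraph.Walk.support_cons, List.count_cons_self] at h1
    have : List.count x q.support = 0 := by omega
    exact List.count_eq_zero.1 this
  have hqsup : ∀ z ∈ q.support, z ∈ t.support := by
    intro z hz
    have : z ∈ t.reverse.support := by
      rw [hq, SimpleGraph.Walk.support_cons]; exact List.mem_cons_of_mem _ hz
    rw [SimpleGraph.Walk.support_reverse, List.mem_reverse] at this
    exact this
  have hc_notS : c ∉ (↑S : Set V) := by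
    have hcq : c ∈ q.support := q.start_mem_support
    exact hnotmem c (SimpleGraph.Walk.support_takeUntil_subset p hxp (hqsup c hcq))
      hadj.2.2 (fun h => hxq (h ▸ hcq))
  refine ⟨c, hadj.1, hc_notS, ?_⟩
  have : (outside G ↑S).Reachable c a := by
    refine ⟨q.transfer (outside G ↑S) ?_⟩
    intro e he
    induction e with
    | _ u w =>
      have hadj' := q.adj_of_mem_edges he
      have hu := q.fst_mem_support_of_mem_edges he
      have hw := q.snd_mem_support_of_mem_edges he
      refine ⟨hadj'.1,
        hnotmem u (SimpleGraph.Walk.support_takeUntil_subset p hxp (hqsup u hu)) hadj'.2.1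
          (fun h => hxq (h ▸ hu)),
        hnotmem w (SimpleGraph.Walk.support_takeUntil_subset p hxp (hqsup w hw)) hadj'.2.2
          (fun h => hxq (h ▸ hw))⟩
  exact this.symm

/-- minimal-length path within a vertex set -/
lemma exists_min_path {G : SimpleGraph V} {x y : V} (A : Set V)
    (h : ∃ p : G.Walk x y, ∀ z ∈ p.support, z ∈ A) :
    ∃ p : G.Walk x y, p.IsPath ∧ (∀ z ∈ p.support, z ∈ A) ∧
      ∀ q : G.Walk x y, (∀ z ∈ q.support, z ∈ A) → p.length ≤ q.length := by
  classical
  set Ls : Set ℕ := {L | ∃ p : G.Walk x y, (∀ z ∈ p.support, z ∈ A) ∧ p.length = L} with hLs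
  have hne : Ls.Nonempty := by obtain ⟨p, hp⟩ := h; exact ⟨p.length, p, hp, rfl⟩
  obtain ⟨p, hp, hlen⟩ := Nat.sInf_mem hne
  have hmin : ∀ q : G.Walk x y, (∀ z ∈ q.support, z ∈ A) → sInf Ls ≤ q.length :=
    fun q hq => Nat.sInf_le ⟨q, hq, rfl⟩
  refine ⟨p.bypass, p.bypass_isPath, fun z hz => hp z (p.support_bypass_subset hz), ?_⟩
  intro q hq
  calc p.bypass.length ≤ p.length := p.length_bypass_le
    _ = sInf Ls := hlen
    _ ≤ q.length := hmin q hq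


lemma sep_clique {G : SimpleGraph V} (hchord : Chordal' G) {a b : V} {S : Finset V}
    (hsep : sep' G a b S) (hmin : ∀ x ∈ S, ¬ sep' G a b (S.erase x)) :
    G.IsClique (↑S : Set V) := by
  classical
  intro x hx y hy hxy
  by_contra hnadj
  obtain ⟨ha, hb, hnr⟩ := hsep
  set A : Set V := {z | (outside G ↑S).Reachable a z} with hA
  set B : Set V := {z | (outside G ↑S).Reachable b z} with hB
  have hAnS : ∀ z ∈ A, z ∉ (↑S : Set V) := fun z hz => reachable_outside_not_mem hz ha
  have hBnS : ∀ z ∈ B, z ∉ (↑S : Set V) := fun z hz => reachable_outside_not_mem hz hb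
  have hAB : ∀ z, z ∈ A → z ∈ B → False := fun z h1 h2 => hnr (h1.trans h2.symm)
  have hminb : ∀ x ∈ S, ¬ sep' G b a (S.erase x) := by
    intro x hxS h
    exact hmin x hxS ⟨h.2.1, h.1, fun hr => h.2.2 hr.symm⟩
  have hsepb : sep' G b a S := ⟨hb, ha, fun hr => hnr hr.symm⟩
  -- neighbors of x and y in A and in B
  obtain ⟨ux, hux_adj, hux_nS, hux_A⟩ := nbr_in_comp ⟨ha, hb, hnr⟩ hmin (Finset.mem_coe.1 hx)
  obtain ⟨uy, huy_adj, huy_nS, huy_A⟩ := nbr_in_comp ⟨ha, hb, hnr⟩ hmin (Finset.mem_coe.1 hy)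
  obtain ⟨vx, hvx_adj, hvx_nS, hvx_B⟩ := nbr_in_comp hsepb hminb (Finset.mem_coe.1 hx)
  obtain ⟨vy, hvy_adj, hvy_nS, hvy_B⟩ := nbr_in_comp hsepb hminb (Finset.mem_coe.1 hy)
  have hxS : x ∈ (↑S : Set V) := hx
  have hyS : y ∈ (↑S : Set V) := hy
  have hxA : x ∉ A := fun h => hAnS x h hxS
  have hyA : y ∉ A := fun h => hAnS y h hyS
  have hxB : x ∉ B := fun h => hBnS x h hxS
  have hyB : y ∉ B := fun h => hBnS y h hyS
  -- existence of an x-y walk with interior in A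
  have hexA : ∃ p : G.Walk x y, ∀ z ∈ p.support, z ∈ ({x, y} ∪ A : Set V) := by
    obtain ⟨wA⟩ := hux_A.symm.trans huy_A
    have hsupA : ∀ z ∈ wA.support, z ∈ A := by
      intro z hz
      exact hux_A.trans ⟨wA.takeUntil z hz⟩
    refine ⟨SimpleGraph.Walk.cons hux_adj ((wA.transfer G (transfer_outside wA)).append
      (SimpleGraph.Walk.cons huy_adj.symm SimpleGraph.Walk.nil)), ?_⟩
    intro z hz
    rw [SimpleGraph.Walk.support_cons, List.mem_cons] at hz
    rcases hz with rfl | hz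
    · exact Or.inl (Or.inl rfl)
    rw [SimpleGraph.Walk.mem_support_append_iff] at hz
    rcases hz with hz | hz
    · rw [SimpleGraph.Walk.support_transfer] at hz
      exact Or.inr (hsupA z hz)
    · rw [SimpleGraph.Walk.support_cons, List.mem_cons] at hz
      rcases hz with rfl | hz
      · exact Or.inr (hsupA _ wA.end_mem_support)
      · rw [SimpleGraph.Walk.support_nil, List.mem_singleton] at hz
        exact Or.inl (Or.inr (by simp [hz]))
  have hexB : ∃ p : G.Walk x y, ∀ z ∈ p.support, z ∈ ({x, y} ∪ B : Set V) := by
    obtain ⟨wB⟩ := hvx_B.symm.trans hvy_B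
    have hsupB : ∀ z ∈ wB.support, z ∈ B := by
      intro z hz
      exact hvx_B.trans ⟨wB.takeUntil z hz⟩
    refine ⟨SimpleGraph.Walk.cons hvx_adj ((wB.transfer G (transfer_outside wB)).append
      (SimpleGraph.Walk.cons hvy_adj.symm SimpleGraph.Walk.nil)), ?_⟩
    intro z hz
    rw [SimpleGraph.Walk.support_cons, List.mem_cons] at hz
    rcases hz with rfl | hz
    · exact Or.inl (Or.inl rfl)
    rw [SimpleGraph.Walk.mem_support_append_iff] at hz
    rcases hz with hz | hz
    · rw [SimpleGraph.Walk.support_transfer] at hz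
      exact Or.inr (hsupB z hz)
    · rw [SimpleGraph.Walk.support_cons, List.mem_cons] at hz
      rcases hz with rfl | hz
      · exact Or.inr (hsupB _ wB.end_mem_support)
      · rw [SimpleGraph.Walk.support_nil, List.mem_singleton] at hz
        exact Or.inl (Or.inr (by simp [hz]))
  obtain ⟨pA, hpA_path, hpA_sup, hpA_min⟩ := exists_min_path _ hexA
  obtain ⟨pB, hpB_path, hpB_sup, hpB_min⟩ := exists_min_path _ hexB
  -- lengths at least 2
  have hlen2 : ∀ (p : G.Walk x y), 2 ≤ p.length := by
    intro p
    rcases Nat.lt_or_ge p.length 2 with h2 | h2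
    · interval_cases h : p.length
      · exact absurd (SimpleGraph.Walk.eq_of_length_eq_zero h) hxy
      · exact absurd (p.adj_of_mem_edges (length_one_edge p h)) hnadj
    · exact h2
  -- the cycle
  set c : G.Walk x x := pA.append pB.reverse with hc
  have hcach : ∀ z ∈ pB.reverse.support, z ∈ ({x, y} ∪ B : Set V) := by
    intro z hz
    rw [SimpleGraph.Walk.support_reverse, List.mem_reverse] at hz
    exact hpB_sup z hz
  have hc_sup : ∀ z ∈ c.support, z ∈ pA.support ∨ z ∈ pB.support := by
    intro z hz
    rw [SimpleGraph.Walk.mem_support_append_iff] at hz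
    rcases hz with hz | hz
    · exact Or.inl hz
    · right; rw [SimpleGraph.Walk.support_reverse, List.mem_reverse] at hz; exact hz
  have hxpB : x ∈ pB.support := pB.start_mem_support
  have hypB : y ∈ pB.support := pB.end_mem_support
  have hxpA : x ∈ pA.support := pA.start_mem_support
  have hypA : y ∈ pA.support := pA.end_mem_support
  -- edge disjointness of the two paths
  have hdisj_edges : ∀ e ∈ pA.edges, e ∈ pB.edges → False := by
    intro e heA heB
    induction e with
    | _ u w =>
      have hadj := pA.adj_of_mem_edges heA
      have hu1 := hpA_sup u (pA.fst_mem_support_of_mem_edges heA)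
      have hw1 := hpA_sup w (pA.snd_mem_support_of_mem_edges heA)
      have hu2 := hpB_sup u (pB.fst_mem_support_of_mem_edges heB)
      have hw2 := hpB_sup w (pB.snd_mem_support_of_mem_edges heB)
      have hu : u = x ∨ u = y := by
        rcases hu1 with h | h
        · exact h
        · rcases hu2 with h' | h'
          · exact h'
          · exact absurd h' (fun hB' => hAB u h hB')
      have hw : w = x ∨ w = y := by
        rcases hw1 with h | h
        · exact h
        · rcases hw2 with h' | h'
          · exact h'
          · exact absurd h' (fun hB' => hAB w h hB')
      rcases hu with rfl | rfl <;> rcases hw with rfl | rfl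
      · exact hadj.ne rfl
      · exact hnadj hadj
      · exact hnadj hadj.symm
      · exact hadj.ne rfl
  have hcyc : c.IsCycle := by
    have hA_tail_nodup : pA.support.tail.Nodup ∧ x ∉ pA.support.tail := by
      have := hpA_path.support_nodup
      rw [pA.support_eq_cons] at this
      exact ⟨(List.nodup_cons.1 this).2, (List.nodup_cons.1 this).1⟩
    have hBrev_nodup : pB.reverse.support.tail.Nodup ∧ y ∉ pB.reverse.support.tail := by
      have := hpB_path.reverse.support_nodup
      rw [pB.reverse.support_eq_cons] at this
      exact ⟨(List.nodup_cons.1 this).2, (List.nodup_cons.1 this).1⟩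
    refine ⟨⟨?_, ?_⟩, ?_⟩
    · -- trail
      constructor
      rw [SimpleGraph.Walk.edges_append, SimpleGraph.Walk.edges_reverse]
      refine List.Nodup.append hpA_path.isTrail.edges_nodup
        (List.nodup_reverse.2 hpB_path.isTrail.edges_nodup) ?_
      intro e heA heB
      exact hdisj_edges e heA (List.mem_reverse.1 heB)
    · -- nonempty
      intro h
      have : c.length = 0 := by rw [h]; rfl
      rw [SimpleGraph.Walk.length_append] at this
      have := hlen2 pA
      omega
    · -- tail nodup
      have hsup : c.support = pA.support ++ pB.reverse.support.tail :=
        SimpleGraph.Walk.support_append pA pB.reverse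
      rw [hsup, pA.support_eq_cons, List.cons_append, List.tail_cons]
      refine List.Nodup.append hA_tail_nodup.1 hBrev_nodup.1 ?_
      intro z hz1 hz2
      have hz1' : z ∈ pA.support := by rw [pA.support_eq_cons]; exact List.mem_cons_of_mem _ hz1
      have hz2' : z ∈ pB.support := by
        have : z ∈ pB.reverse.support := by
          rw [pB.reverse.support_eq_cons]; exact List.mem_cons_of_mem _ hz2
        rw [SimpleGraph.Walk.support_reverse, List.mem_reverse] at this
        exact this
      have h1 := hpA_sup z hz1'
      have h2 := hpB_sup z hz2'
      have hzx : z ≠ x := fun h => hA_tail_nodup.2 (h ▸ hz1)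
      have hzy : z ≠ y := fun h => hBrev_nodup.2 (h ▸ hz2)
      rcases h1 with (h1 | h1) | h1
      · exact hzx h1
      · exact hzy h1
      · rcases h2 with (h2 | h2) | h2
        · exact hzx h2
        · exact hzy h2
        · exact hAB z h1 h2
  have hclen : 3 < c.length := by
    have h1 := hlen2 pA
    have h2 := hlen2 pB
    have : c.length = pA.length + pB.length := by
      rw [SimpleGraph.Walk.length_append, SimpleGraph.Walk.length_reverse]
    omega
  obtain ⟨u, w, hu, hw, hadj, hne⟩ := hchord x c hcyc hclen
  have huAB := hc_sup u hu
  have hwAB := hc_sup w hw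
  have hnA : s(u, w) ∉ pA.edges := fun h =>
    hne (by rw [SimpleGraph.Walk.edges_append]; exact List.mem_append.2 (Or.inl h))
  have hnB : s(u, w) ∉ pB.edges := fun h =>
    hne (by
      rw [SimpleGraph.Walk.edges_append, SimpleGraph.Walk.edges_reverse]
      exact List.mem_append.2 (Or.inr (List.mem_reverse.2 h)))
  -- case analysis
  by_cases hupA : u ∈ pA.support <;> by_cases hwpA : w ∈ pA.support
  · -- both in pA: shortcut
    obtain ⟨q, hql, hqs⟩ := shortcut pA hupA hwpA hadj hnA
    have := hpA_min q (fun z hz => hpA_sup z (hqs z hz))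
    omega
  · -- u ∈ pA, w ∉ pA → w ∈ pB
    have hwpB : w ∈ pB.support := hwAB.resolve_left hwpA
    by_cases hupB : u ∈ pB.support
    · obtain ⟨q, hql, hqs⟩ := shortcut pB hupB hwpB hadj hnB
      have := hpB_min q (fun z hz => hpB_sup z (hqs z hz))
      omega
    · -- u strictly in A, w strictly in B
      have huA : u ∈ A := by
        rcases hpA_sup u hupA with (h | h) | h
        · exact absurd (h ▸ hxpB) hupB
        · exact absurd (h ▸ hypB) hupB
        · exact h
      have hwB : w ∈ B := by
        rcases hpB_sup w hwpB with (h | h) | h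
        · exact absurd (h ▸ hxpA) hwpA
        · exact absurd (h ▸ hypA) hwpA
        · exact h
      have : (outside G ↑S).Adj u w :=
        outside_adj.2 ⟨hadj, hAnS u huA, hBnS w hwB⟩
      exact hAB w (huA.trans this.reachable) hwB
  · -- u ∉ pA → u ∈ pB; symmetric to previous
    have hupB : u ∈ pB.support := huAB.resolve_left hupA
    by_cases hwpB : w ∈ pB.support
    · obtain ⟨q, hql, hqs⟩ := shortcut pB hupB hwpB hadj hnB
      have := hpB_min q (fun z hz => hpB_sup z (hqs z hz))
      omega
    · have hwA : w ∈ A := by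
        rcases hpA_sup w hwpA with (h | h) | h
        · exact absurd (h ▸ hxpB) hwpB
        · exact absurd (h ▸ hypB) hwpB
        · exact h
      have huB : u ∈ B := by
        rcases hpB_sup u hupB with (h | h) | h
        · exact absurd (h ▸ hxpA) hupA
        · exact absurd (h ▸ hypA) hupA
        · exact h
      have : (outside G ↑S).Adj w u :=
        outside_adj.2 ⟨hadj.symm, hAnS w hwA, hBnS u huB⟩
      exact hAB u (hwA.trans this.reachable) huB
  · -- both in pB
    have hupB : u ∈ pB.support := huAB.resolve_left hupA
    have hwpB : w ∈ pB.support := hwAB.resolve_left hwpA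
    obtain ⟨q, hql, hqs⟩ := shortcut pB hupB hwpB hadj hnB
    have := hpB_min q (fun z hz => hpB_sup z (hqs z hz))
    omega

end Graphs

/-- Dirac: a chordal graph has a simplicial vertex outside any given non-spanning clique. -/
lemma dirac (k : ℕ) : ∀ (V : Type) [Fintype V] [DecidableEq V] (G : SimpleGraph V),
    Fintype.card V ≤ k → Chordal' G → ∀ K : Finset V, G.IsClique (↑K : Set V) →
    K ≠ Finset.univ → ∃ v, v ∉ K ∧ G.IsClique (G.neighborSet v) := by
  induction k with
  | zero =>
    intro V _ _ G hcard _ K _ hne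
    haveI : IsEmpty V := Fintype.card_eq_zero_iff.1 (Nat.le_zero.1 hcard)
    exact absurd (Finset.eq_univ_of_forall (fun x => isEmptyElim x)) hne
  | succ k ih =>
    intro V _ _ G hcard hchord K hK hKne
    classical
    by_cases hcomp : G.IsClique (Set.univ : Set V)
    · have hv : ∃ v, v ∉ K := by
        by_contra h
        push_neg at h
        exact hKne (Finset.eq_univ_of_forall h)
      obtain ⟨v, hv⟩ := hv
      exact ⟨v, hv, hcomp.subset (Set.subset_univ _)⟩
    · -- find two nonadjacent vertices
      have hab : ∃ a b : V, a ≠ b ∧ ¬ G.Adj a b := by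
        rw [SimpleGraph.isClique_iff, Set.pairwise_univ] at hcomp
        simp only [Pairwise] at hcomp
        push_neg at hcomp
        obtain ⟨a, b, h1, h2⟩ := hcomp
        exact ⟨a, b, h1, h2⟩
      obtain ⟨a, b, habne, hnadj⟩ := hab
      obtain ⟨S, hsep, hmin⟩ := exists_min_sep ⟨_, base_sep habne hnadj⟩
      have hSclique := sep_clique hchord hsep hmin
      -- key: find a simplicial vertex in the component of c
      have key : ∀ (c d : V), sep' G c d S → (∀ x ∈ S, ¬ sep' G c d (S.erase x)) →
          ∃ v, (outside G ↑S).Reachable c v ∧ v ∉ (↑S : Set V) ∧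
            G.IsClique (G.neighborSet v) := by
        intro c d hsep' hmin'
        set comp : Set V := {z | (outside G ↑S).Reachable c z} with hcomp_def
        set sA : Set V := comp ∪ ↑S with hsA
        haveI : Fintype ↥sA := Fintype.ofFinite ↥sA
        have hc_comp : c ∈ comp := SimpleGraph.Reachable.refl c
        have hd_nsA : d ∉ sA := by
          rintro (hd | hd)
          · exact hsep'.2.2 hd
          · exact hsep'.2.1 hd
        have hcard' : Fintype.card ↥sA ≤ k := by
          have hlt : Fintype.card ↥sA < Fintype.card V := by
            apply Fintype.card_lt_of_injective_of_notMem Subtype.val Subtype.val_injective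
              (b := d)
            rw [Subtype.range_coe]
            exact hd_nsA
          omega
        set G' := G.induce sA with hG'
        have hchord' : Chordal' G' := chordal'_induce hchord sA
        set K' : Finset ↥sA := Finset.univ.filter (fun z => z.1 ∈ S) with hK'
        have hK'clique : G'.IsClique (↑K' : Set ↥sA) := by
          rintro ⟨z, hz⟩ hz1 ⟨w, hw⟩ hw1 hzw
          simp only [hK', Finset.coe_filter, Set.mem_setOf_eq, Finset.mem_univ, true_and] at hz1 hw1
          exact hSclique hz1 hw1 (fun h => hzw (Subtype.ext h))
        have hK'ne : K' ≠ Finset.univ := by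
          intro h
          have hcA : (⟨c, Or.inl hc_comp⟩ : ↥sA) ∈ K' := h ▸ Finset.mem_univ _
          simp only [hK', Finset.mem_filter] at hcA
          exact hsep'.1 hcA.2
        obtain ⟨v', hv'K, hv'simp⟩ := ih ↥sA G' hcard' hchord' K' hK'clique hK'ne
        have hv'nS : v'.1 ∉ (↑S : Set V) := by
          intro h
          exact hv'K (Finset.mem_filter.2 ⟨Finset.mem_univ _, Finset.mem_coe.1 h⟩)
        have hv'comp : v'.1 ∈ comp := by
          rcases v'.2 with h | h
          · exact h
          · exact absurd h hv'nS
        have hnbr_sA : ∀ w, G.Adj v'.1 w → w ∈ sA := by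
          intro w hw
          by_cases hwS : w ∈ (↑S : Set V)
          · exact Or.inr hwS
          · left
            have : (outside G ↑S).Adj v'.1 w := outside_adj.2 ⟨hw, hv'nS, hwS⟩
            exact hv'comp.trans this.reachable
        refine ⟨v'.1, hv'comp, hv'nS, ?_⟩
        intro z1 hz1 z2 hz2 hne
        have hz1' : G.Adj v'.1 z1 := hz1
        have hz2' : G.Adj v'.1 z2 := hz2
        have m1 : (⟨z1, hnbr_sA z1 hz1'⟩ : ↥sA) ∈ G'.neighborSet v' := hz1'
        have m2 : (⟨z2, hnbr_sA z2 hz2'⟩ : ↥sA) ∈ G'.neighborSet v' := hz2'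
        have := hv'simp m1 m2 (fun h => hne (congrArg Subtype.val h))
        exact this
      have hsepb : sep' G b a S := ⟨hsep.2.1, hsep.1, fun hr => hsep.2.2 hr.symm⟩
      have hminb : ∀ x ∈ S, ¬ sep' G b a (S.erase x) := by
        intro x hx h
        exact hmin x hx ⟨h.2.1, h.1, fun hr => h.2.2 hr.symm⟩
      obtain ⟨vA, hvA_comp, hvA_nS, hvA_simp⟩ := key a b hsep hmin
      obtain ⟨vB, hvB_comp, hvB_nS, hvB_simp⟩ := key b a hsepb hminb
      have hvAB : ¬ G.Adj vA vB := by
        intro h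
        have : (outside G ↑S).Adj vA vB := outside_adj.2 ⟨h, hvA_nS, hvB_nS⟩
        exact hsep.2.2 ((hvA_comp.trans this.reachable).trans hvB_comp.symm)
      have hvABne : vA ≠ vB := by
        rintro rfl
        exact hsep.2.2 (hvA_comp.trans hvB_comp.symm)
      by_cases hvAK : vA ∈ K
      · refine ⟨vB, ?_, hvB_simp⟩
        intro hvBK
        exact hvAB (hK (Finset.mem_coe.2 hvAK) (Finset.mem_coe.2 hvBK) hvABne)
      · exact ⟨vA, hvAK, hvA_simp⟩

/-- solvability of `P y = a` for symmetric real `P` when `a ⊥ ker P`. -/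
lemma exists_solution {W : Type} [Fintype W] [DecidableEq W] (P : Matrix W W ℝ)
    (hP : P.IsHermitian) (a : W → ℝ)
    (h : ∀ u : W → ℝ, P *ᵥ u = 0 → a ⬝ᵥ u = 0) : ∃ y, P *ᵥ y = a := by
  set T := Matrix.toEuclideanLin P with hT
  have hsymm : T.IsSymmetric := Matrix.isHermitian_iff_isSymmetric.1 hP
  have hle : LinearMap.range T ≤ (LinearMap.ker T)ᗮ := by
    rintro x ⟨u, rfl⟩
    rw [Submodule.mem_orthogonal]
    intro y hy
    have h0 : T y = 0 := LinearMap.mem_ker.1 hy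
    rw [← hsymm y u, h0, inner_zero_left]
  have h1 := LinearMap.finrank_range_add_finrank_ker T
  have h2 := Submodule.finrank_add_finrank_orthogonal (𝕜 := ℝ) (LinearMap.ker T)
  have heq : LinearMap.range T = (LinearMap.ker T)ᗮ :=
    Submodule.eq_of_le_of_finrank_le hle (by omega)
  have hmulvec : ∀ y : EuclideanSpace ℝ W, T y = 0 → P *ᵥ (WithLp.equiv 2 (W → ℝ) y) = 0 := by
    intro y hy
    have : WithLp.equiv 2 (W → ℝ) (T y) = P *ᵥ WithLp.equiv 2 (W → ℝ) y := rfl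
    rw [hy] at this
    rw [← this]
    rfl
  have ha : (WithLp.equiv 2 (W → ℝ)).symm a ∈ (LinearMap.ker T)ᗮ := by
    rw [Submodule.mem_orthogonal]
    intro y hy
    have h3 := h _ (hmulvec y (LinearMap.mem_ker.1 hy))
    show (inner ℝ y ((WithLp.equiv 2 (W → ℝ)).symm a) : ℝ) = 0
    rw [PiLp.inner_apply, ← h3, dotProduct]
    refine Finset.sum_congr rfl (fun i _ => ?_)
    simp [RCLike.inner_apply, starRingEnd_apply, mul_comm]
  rw [← heq] at ha
  obtain ⟨y, hy⟩ := ha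
  refine ⟨WithLp.equiv 2 (W → ℝ) y, ?_⟩
  have : WithLp.equiv 2 (W → ℝ) (T y) = P *ᵥ WithLp.equiv 2 (W → ℝ) y := rfl
  rw [hy] at this
  rw [← this]
  rfl

lemma dot_expand {V : Type} [Fintype V] (M : Matrix V V ℝ) (x y : V → ℝ) :
    x ⬝ᵥ (M *ᵥ y) = ∑ u, ∑ w, x u * M u w * y w := by
  simp only [dotProduct, Matrix.mulVec, Finset.mul_sum, mul_assoc]

lemma dot_mulVec_symm {V : Type} [Fintype V] {M : Matrix V V ℝ}
    (hM : ∀ i j, M i j = M j i) (u w : V → ℝ) :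
    (M *ᵥ u) ⬝ᵥ w = u ⬝ᵥ (M *ᵥ w) := by
  rw [dotProduct_comm, dot_expand, dot_expand, Finset.sum_comm]
  refine Finset.sum_congr rfl fun i _ => Finset.sum_congr rfl fun j _ => ?_
  rw [hM j i]
  ring

lemma sum_split {V : Type} [Fintype V] [DecidableEq V] (v : V)
    [Fintype ↥({u : V | u ≠ v})] (g : V → ℝ) :
    ∑ u, g u = g v + ∑ u : ↥({u : V | u ≠ v}), g u.1 := by
  rw [← Finset.sum_subtype (Finset.univ.erase v)
    (fun x => by simp [Finset.mem_erase, Set.mem_setOf_eq]) g]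
  exact (Finset.add_sum_erase _ g (Finset.mem_univ v)).symm

lemma quad_split {V : Type} [Fintype V] [DecidableEq V] (v : V)
    [Fintype ↥({u : V | u ≠ v})]
    (M : Matrix V V ℝ) (hM : ∀ i j, M i j = M j i) (x : V → ℝ) :
    x ⬝ᵥ (M *ᵥ x) = x v * M v v * x v
      + 2 * (x v * ∑ u : ↥({u : V | u ≠ v}), M v u.1 * x u.1)
      + ∑ u : ↥({u : V | u ≠ v}), ∑ w : ↥({u : V | u ≠ v}), x u.1 * M u.1 w.1 * x w.1 := by
  rw [dot_expand, sum_split v (fun u => ∑ w, x u * M u w * x w)]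
  rw [sum_split v (fun w => x v * M v w * x w)]
  have hrest : ∀ u : ↥({u : V | u ≠ v}), (∑ w, x u.1 * M u.1 w * x w)
      = x u.1 * M u.1 v * x v + ∑ w : ↥({u : V | u ≠ v}), x u.1 * M u.1 w.1 * x w.1 :=
    fun u => sum_split v (fun w => x u.1 * M u.1 w * x w)
  rw [Finset.sum_congr rfl (fun u _ => hrest u), Finset.sum_add_distrib]
  have : ∑ u : ↥({u : V | u ≠ v}), x u.1 * M u.1 v * x v
      = x v * ∑ u : ↥({u : V | u ≠ v}), M v u.1 * x u.1 := by
    rw [Finset.mul_sum]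
    refine Finset.sum_congr rfl fun u _ => ?_
    rw [hM u.1 v]
    ring
  rw [this]
  have : ∑ u : ↥({u : V | u ≠ v}), x v * M v u.1 * x u.1
      = x v * ∑ u : ↥({u : V | u ≠ v}), M v u.1 * x u.1 := by
    rw [Finset.mul_sum]
    refine Finset.sum_congr rfl fun u _ => ?_
    ring
  rw [this]
  ring

/-- PSD completion of partial matrices with chordal pattern. -/
theorem completion (k : ℕ) : ∀ (V : Type) [Fintype V] [DecidableEq V] (G : SimpleGraph V),
    Fintype.card V ≤ k → Chordal' G → ∀ f : Matrix V V ℝ, (∀ i j, f i j = f j i) →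
    (∀ x : V → ℝ, ({u | x u ≠ 0}).Pairwise G.Adj → 0 ≤ x ⬝ᵥ (f *ᵥ x)) →
    ∃ X : Matrix V V ℝ, X.PosSemidef ∧ ∀ i j, (i = j ∨ G.Adj i j) → X i j = f i j := by
  induction k with
  | zero =>
    intro V _ _ G hcard _ f _ _
    haveI : IsEmpty V := Fintype.card_eq_zero_iff.1 (Nat.le_zero.1 hcard)
    exact ⟨0, Matrix.PosSemidef.zero, fun i _ _ => isEmptyElim i⟩
  | succ k ih =>
    intro V _ _ G hcard hchord f hfsymm hpsd
    classical
    by_cases hE : IsEmpty V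
    · exact ⟨0, Matrix.PosSemidef.zero, fun i _ _ => isEmptyElim i⟩
    haveI : Nonempty V := not_isEmpty_iff.1 hE
    -- simplicial vertex
    obtain ⟨v, -, hsimp⟩ := dirac (k+1) V G hcard hchord ∅
      (by rw [Finset.coe_empty]; exact Set.pairwise_empty _)
      (fun h => Finset.univ_nonempty.ne_empty h.symm)
    set sV : Set V := {u : V | u ≠ v} with hsV
    haveI : Fintype ↥sV := Fintype.ofFinite ↥sV
    have hcard' : Fintype.card ↥sV ≤ k := by
      have hlt : Fintype.card ↥sV < Fintype.card V := by
        apply Fintype.card_lt_of_injective_of_notMem Subtype.val Subtype.val_injective (b := v)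
        rw [Subtype.range_coe]
        exact fun h => h rfl
      omega
    set G' := G.induce sV with hG'
    have hadj' : ∀ u w : ↥sV, G'.Adj u w ↔ G.Adj u.1 w.1 := fun u w => Iff.rfl
    have hchord' : Chordal' G' := chordal'_induce hchord sV
    set f' : Matrix ↥sV ↥sV ℝ := Matrix.of (fun u w => f u.1 w.1) with hf'
    -- the extension-by-a-value-at-v operation
    set extv : ℝ → (↥sV → ℝ) → (V → ℝ) :=
      fun c z u => if h : u = v then c else z ⟨u, h⟩ with hextv
    have hextv_v : ∀ c z, extv c z v = c := fun c z => dif_pos rfl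
    have hextv_u : ∀ c z (u : ↥sV), extv c z u.1 = z u := by
      intro c z u
      rw [hextv]
      simp only [dif_neg u.2]
    -- induction hypothesis applied to the graph minus v
    have hpsd' : ∀ x' : ↥sV → ℝ, ({u | x' u ≠ 0}).Pairwise G'.Adj →
        0 ≤ x' ⬝ᵥ (f' *ᵥ x') := by
      intro x' hx'
      have h0 : extv 0 x' v = 0 := hextv_v 0 x'
      have hQ : (extv 0 x') ⬝ᵥ (f *ᵥ (extv 0 x')) = x' ⬝ᵥ (f' *ᵥ x') := by
        rw [quad_split v f hfsymm, dot_expand f' x' x', hextv_v]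
        simp only [mul_zero, zero_mul, add_zero, zero_add]
        refine Finset.sum_congr rfl fun u _ => Finset.sum_congr rfl fun w _ => ?_
        rw [hextv_u, hextv_u]
        rfl
      rw [← hQ]
      apply hpsd
      intro u1 hu1 u2 hu2 hne
      have hu1' : extv 0 x' u1 ≠ 0 := hu1
      have hu2' : extv 0 x' u2 ≠ 0 := hu2
      have h1 : u1 ≠ v := by
        intro h
        rw [h, h0] at hu1'
        exact hu1' rfl
      have h2 : u2 ≠ v := by
        intro h
        rw [h, h0] at hu2'
        exact hu2' rfl
      have m1 : (⟨u1, h1⟩ : ↥sV) ∈ {u | x' u ≠ 0} := by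
        rw [show u1 = ((⟨u1, h1⟩ : ↥sV) : V) from rfl, hextv_u] at hu1'
        exact hu1'
      have m2 : (⟨u2, h2⟩ : ↥sV) ∈ {u | x' u ≠ 0} := by
        rw [show u2 = ((⟨u2, h2⟩ : ↥sV) : V) from rfl, hextv_u] at hu2'
        exact hu2'
      exact (hadj' _ _).1 (hx' m1 m2 (fun h => hne (congrArg Subtype.val h)))
    obtain ⟨X', hX'psd, hX'pat⟩ := ih ↥sV G' hcard' hchord' f'
      (fun i j => hfsymm i.1 j.1) hpsd'
    have hX'symm : ∀ i j : ↥sV, X' i j = X' j i := by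
      intro i j
      have := hX'psd.1.apply j i
      rwa [star_trivial] at this
    -- pattern agreement for X'
    have hX'f : ∀ u w : ↥sV, (u.1 = w.1 ∨ G.Adj u.1 w.1) → X' u w = f u.1 w.1 := by
      intro u w h
      rcases h with h | h
      · exact hX'pat u w (Or.inl (Subtype.ext h))
      · exact hX'pat u w (Or.inr ((hadj' u w).2 h))
    -- mask data
    set N : ↥sV → Prop := fun u => G.Adj v u.1 with hN
    set P : Matrix ↥sV ↥sV ℝ :=
      Matrix.of (fun u w => if N u ∧ N w then f u.1 w.1 else 0) with hP
    set av : ↥sV → ℝ := fun u => if N u then f v u.1 else 0 with hav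
    have hNboth : ∀ u w : ↥sV, N u → N w → u.1 = w.1 ∨ G.Adj u.1 w.1 := by
      intro u w hu hw
      by_cases h : u.1 = w.1
      · exact Or.inl h
      · exact Or.inr (hsimp hu hw h)
    have hPX' : ∀ u w : ↥sV, N u → N w → P u w = X' u w := by
      intro u w hu hw
      rw [hP]
      simp only [Matrix.of_apply, if_pos (And.intro hu hw)]
      exact (hX'f u w (hNboth u w hu hw)).symm
    have hPsymm : ∀ i j : ↥sV, P i j = P j i := by
      intro i j
      rw [hP]
      simp only [Matrix.of_apply, and_comm]
      rw [hfsymm i.1 j.1]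
    have hPherm : P.IsHermitian := by
      show Pᴴ = P
      ext i j
      rw [Matrix.conjTranspose_apply, star_trivial, hPsymm]
    -- the key quadratic identity
    have hQ : ∀ (c : ℝ) (z : ↥sV → ℝ), (∀ u, ¬ N u → z u = 0) →
        (extv c z) ⬝ᵥ (f *ᵥ (extv c z))
          = c * f v v * c + 2 * (c * (av ⬝ᵥ z)) + z ⬝ᵥ (P *ᵥ z) := by
      intro c z hz
      rw [quad_split v f hfsymm, hextv_v]
      have hsum1 : (∑ u : ↥({u : V | u ≠ v}), f v u.1 * extv c z u.1) = av ⬝ᵥ z := by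
        rw [dotProduct]
        refine Finset.sum_congr rfl fun u _ => ?_
        rw [hextv_u]
        by_cases hu : N u
        · rw [hav]; simp only [if_pos hu]
        · rw [hz u hu, hav]; simp only [if_neg hu]; ring
      have hsum2 : (∑ u : ↥({u : V | u ≠ v}), ∑ w : ↥({u : V | u ≠ v}),
          extv c z u.1 * f u.1 w.1 * extv c z w.1) = z ⬝ᵥ (P *ᵥ z) := by
        rw [dot_expand]
        refine Finset.sum_congr rfl fun u _ => Finset.sum_congr rfl fun w _ => ?_
        rw [hextv_u, hextv_u]
        by_cases hu : N u
        · by_cases hw : N w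
          · rw [hP]; simp only [Matrix.of_apply, if_pos (And.intro hu hw)]
          · rw [hz w hw]; ring
        · rw [hz u hu]; ring
      rw [hsum1, hsum2]
    -- support of extensions is a clique
    have hsupp : ∀ (c : ℝ) (z : ↥sV → ℝ), (∀ u, ¬ N u → z u = 0) →
        ({u | extv c z u ≠ 0}).Pairwise G.Adj := by
      intro c z hz u1 hu1 u2 hu2 hne
      have key : ∀ u (h : u ≠ v), extv c z u ≠ 0 → G.Adj v u := by
        intro u h hne0
        by_contra hnadj
        have : z ⟨u, h⟩ = 0 := hz _ hnadj
        rw [show u = ((⟨u, h⟩ : ↥sV) : V) from rfl, hextv_u, this] at hne0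
        exact hne0 rfl
      by_cases h1 : u1 = v
      · subst h1
        exact key u2 (fun h => hne h.symm) hu2
      · by_cases h2 : u2 = v
        · subst h2
          exact (key u1 h1 hu1).symm
        · exact hsimp (key u1 h1 hu1) (key u2 h2 hu2) hne
    -- solving P y = av
    have hker : ∀ u0 : ↥sV → ℝ, P *ᵥ u0 = 0 → av ⬝ᵥ u0 = 0 := by
      intro u0 hu0
      set u' : ↥sV → ℝ := fun w => if N w then u0 w else 0 with hu'
      have hmask : ∀ w, ¬ N w → u' w = 0 := fun w hw => by rw [hu']; simp [if_neg hw]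
      have hPu' : P *ᵥ u' = 0 := by
        rw [← hu0]
        ext w
        rw [Matrix.mulVec, Matrix.mulVec, dotProduct, dotProduct]
        refine Finset.sum_congr rfl fun x _ => ?_
        by_cases hx : N x
        · rw [hu']; simp [if_pos hx]
        · have : P w x = 0 := by rw [hP]; simp only [Matrix.of_apply]; simp [hx]
          rw [this]; ring
      have hau' : av ⬝ᵥ u' = av ⬝ᵥ u0 := by
        rw [dotProduct, dotProduct]
        refine Finset.sum_congr rfl fun x _ => ?_
        by_cases hx : N x
        · rw [hu']; simp [if_pos hx]
        · have : av x = 0 := by rw [hav]; simp [if_neg hx]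
          rw [this]; ring
      rw [← hau']
      by_contra hd
      set d := av ⬝ᵥ u' with hdd
      set t : ℝ := (-(f v v) - 1)/(2*d) with ht
      have h0 := hpsd (extv 1 (t • u')) (hsupp 1 (t • u')
        (fun u hu => by rw [Pi.smul_apply, hmask u hu, smul_zero]))
      rw [hQ 1 (t • u') (fun u hu => by rw [Pi.smul_apply, hmask u hu, smul_zero])] at h0
      have hz1 : (t • u') ⬝ᵥ (P *ᵥ (t • u')) = 0 := by
        rw [Matrix.mulVec_smul, hPu', smul_zero, dotProduct_zero]
      have hz2 : av ⬝ᵥ (t • u') = t * d := by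
        rw [dotProduct_smul, smul_eq_mul]
      rw [hz1, hz2] at h0
      have h2d : 2 * (1 * (t * d)) = -(f v v) - 1 := by
        rw [ht]
        field_simp
      rw [h2d] at h0
      linarith
    obtain ⟨y1, hy1⟩ := exists_solution P hPherm av hker
    set y0 : ↥sV → ℝ := fun u => if N u then y1 u else 0 with hy0
    have hy0mask : ∀ u, ¬ N u → y0 u = 0 := fun u hu => by rw [hy0]; simp [if_neg hu]
    have hPy0 : P *ᵥ y0 = av := by
      rw [← hy1]
      ext w
      rw [Matrix.mulVec, Matrix.mulVec, dotProduct, dotProduct]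
      refine Finset.sum_congr rfl fun x _ => ?_
      by_cases hx : N x
      · rw [hy0]; simp [if_pos hx]
      · have : P w x = 0 := by rw [hP]; simp only [Matrix.of_apply]; simp [hx]
        rw [this]; ring
    -- f v v dominates
    have hfvv : y0 ⬝ᵥ (P *ᵥ y0) ≤ f v v := by
      have hmask' : ∀ u, ¬ N u → (-y0) u = 0 :=
        fun u hu => by rw [Pi.neg_apply, hy0mask u hu, neg_zero]
      have h0 := hpsd (extv 1 (-y0)) (hsupp 1 (-y0) hmask')
      rw [hQ 1 (-y0) hmask'] at h0
      have e1 : av ⬝ᵥ (-y0) = -(y0 ⬝ᵥ (P *ᵥ y0)) := by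
        rw [dotProduct_neg, ← hPy0, dotProduct_comm]
      have e2 : (-y0) ⬝ᵥ (P *ᵥ (-y0)) = y0 ⬝ᵥ (P *ᵥ y0) := by
        rw [Matrix.mulVec_neg, dotProduct_neg, neg_dotProduct, neg_neg]
      rw [e1, e2] at h0
      linarith
    -- X' agrees with P in masked quadratic forms
    have hy0X' : ∀ z : ↥sV → ℝ, (∀ u, ¬ N u → z u = 0) →
        z ⬝ᵥ (X' *ᵥ z) = z ⬝ᵥ (P *ᵥ z) := by
      intro z hz
      rw [dot_expand, dot_expand]
      refine Finset.sum_congr rfl fun u _ => Finset.sum_congr rfl fun w _ => ?_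
      by_cases hu : N u
      · by_cases hw : N w
        · rw [hPX' u w hu hw]
        · rw [hz w hw]; ring
      · rw [hz u hu]; ring
    set row : ↥sV → ℝ := X' *ᵥ y0 with hrow
    have hrow_a : ∀ u : ↥sV, N u → row u = av u := by
      intro u hu
      rw [hrow, ← hPy0]
      rw [Matrix.mulVec, Matrix.mulVec, dotProduct, dotProduct]
      refine Finset.sum_congr rfl fun x _ => ?_
      by_cases hx : N x
      · rw [hPX' u x hu hx]
      · rw [hy0mask x hx]; ring
    -- build the completed matrix
    set X : Matrix V V ℝ := Matrix.of (fun i j =>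
      if hi : i = v then (if hj : j = v then f v v else row ⟨j, hj⟩)
      else if hj : j = v then row ⟨i, hi⟩ else X' ⟨i, hi⟩ ⟨j, hj⟩) with hX
    have hXvv : X v v = f v v := by
      rw [hX]
      rw [Matrix.of_apply, dif_pos rfl, dif_pos rfl]
    have hXvu' : ∀ (j : V) (hj : j ≠ v), X v j = row ⟨j, hj⟩ := by
      intro j hj
      rw [hX, Matrix.of_apply, dif_pos rfl, dif_neg hj]
    have hXuv' : ∀ (i : V) (hi : i ≠ v), X i v = row ⟨i, hi⟩ := by
      intro i hi
      rw [hX, Matrix.of_apply, dif_neg hi, dif_pos rfl]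
    have hXsub' : ∀ (i j : V) (hi : i ≠ v) (hj : j ≠ v), X i j = X' ⟨i, hi⟩ ⟨j, hj⟩ := by
      intro i j hi hj
      rw [hX, Matrix.of_apply, dif_neg hi, dif_neg hj]
    have hXvu : ∀ u : ↥sV, X v u.1 = row u := by
      intro u
      rw [hXvu' u.1 u.2, Subtype.coe_eta]
    have hXsub : ∀ u w : ↥sV, X u.1 w.1 = X' u w := by
      intro u w
      rw [hXsub' u.1 w.1 u.2 w.2, Subtype.coe_eta, Subtype.coe_eta]
    have hav_eq : ∀ (u : ↥sV), N u → av u = f v u.1 := by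
      intro u hu
      rw [hav]
      simp only [if_pos hu]
    have hXsymm : ∀ i j, X i j = X j i := by
      intro i j
      by_cases hi : i = v <;> by_cases hj : j = v
      · rw [hi, hj]
      · rw [hi, hXvu' j hj, hXuv' j hj]
      · rw [hj, hXvu' i hi, hXuv' i hi]
      · rw [hXsub' i j hi hj, hXsub' j i hj hi, hX'symm]
    -- pattern agreement
    have hpat : ∀ i j, (i = j ∨ G.Adj i j) → X i j = f i j := by
      intro i j h
      by_cases hi : i = v <;> by_cases hj : j = v
      · rw [hi, hj, hXvv]
      · have hadj : G.Adj v j := by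
          rcases h with h | h
          · exact absurd (hi.symm.trans h).symm hj
          · rw [hi] at h; exact h
        rw [hi, hXvu' j hj, hrow_a ⟨j, hj⟩ hadj, hav_eq ⟨j, hj⟩ hadj]
      · have hadj : G.Adj v i := by
          rcases h with h | h
          · exact absurd (h.trans hj) hi
          · rw [hj] at h; exact h.symm
        rw [hj, hXuv' i hi, hrow_a ⟨i, hi⟩ hadj, hav_eq ⟨i, hi⟩ hadj]
        exact hfsymm v i
      · rw [hXsub' i j hi hj]
        apply hX'f
        exact h
    -- positive semidefiniteness
    have hXherm : X.IsHermitian := by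
      show Xᴴ = X
      ext i j
      rw [Matrix.conjTranspose_apply, star_trivial, hXsymm]
    have hy0X'y0 : y0 ⬝ᵥ (X' *ᵥ y0) ≤ f v v := le_trans (le_of_eq (hy0X' y0 hy0mask)) hfvv
    refine ⟨X, Matrix.PosSemidef.of_dotProduct_mulVec_nonneg hXherm ?_, hpat⟩
    intro x
    have hstar : star x = x := funext fun i => star_trivial _
    rw [hstar]
    set t := x v with htdef
    set xb : ↥sV → ℝ := fun u => x u.1 with hxb
    have hsplit := quad_split v X hXsymm x
    have e1 : ∑ u : ↥sV, X v u.1 * x u.1 = row ⬝ᵥ xb := by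
      rw [dotProduct]
      exact Finset.sum_congr rfl fun u _ => by rw [hXvu u]
    have e2 : ∑ u : ↥sV, ∑ w : ↥sV, x u.1 * X u.1 w.1 * x w.1 = xb ⬝ᵥ (X' *ᵥ xb) := by
      rw [dot_expand]
      exact Finset.sum_congr rfl fun u _ => Finset.sum_congr rfl fun w _ => by
        rw [hXsub u w]
    rw [e1, e2, hXvv] at hsplit
    -- row ⬝ᵥ xb = y0 ⬝ᵥ (X' *ᵥ xb)
    have e3 : row ⬝ᵥ xb = y0 ⬝ᵥ (X' *ᵥ xb) := by
      rw [hrow, dot_mulVec_symm hX'symm]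
    rw [e3] at hsplit
    -- the PSD certificate
    have hpsdX' : 0 ≤ (t • y0 + xb) ⬝ᵥ (X' *ᵥ (t • y0 + xb)) := by
      have := hX'psd.dotProduct_mulVec_nonneg (t • y0 + xb)
      rwa [show star (t • y0 + xb) = t • y0 + xb from funext fun i => star_trivial _] at this
    have hexpand : (t • y0 + xb) ⬝ᵥ (X' *ᵥ (t • y0 + xb))
        = t * t * (y0 ⬝ᵥ (X' *ᵥ y0)) + 2 * (t * (y0 ⬝ᵥ (X' *ᵥ xb))) + xb ⬝ᵥ (X' *ᵥ xb) := by
      have h1 : xb ⬝ᵥ (X' *ᵥ y0) = y0 ⬝ᵥ (X' *ᵥ xb) := by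
        rw [← dot_mulVec_symm hX'symm, dotProduct_comm]
      simp only [Matrix.mulVec_add, Matrix.mulVec_smul, dotProduct_add, add_dotProduct,
        smul_dotProduct, dotProduct_smul, smul_eq_mul]
      rw [h1]
      ring
    rw [hexpand] at hpsdX'
    have htt : 0 ≤ t * t * (f v v - y0 ⬝ᵥ (X' *ᵥ y0)) :=
      mul_nonneg (mul_self_nonneg t) (by linarith)
    rw [hsplit]
    linarith


section Sel
variable {n : ℕ}

def ordF (s : Finset (Fin n)) : Fin s.card → Fin n :=
  fun h => ((s.orderIsoOfFin rfl h : s) : Fin n)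

lemma ordF_mem (s : Finset (Fin n)) (h : Fin s.card) : ordF s h ∈ s :=
  (s.orderIsoOfFin rfl h).2

lemma ordF_inj (s : Finset (Fin n)) : Function.Injective (ordF s) :=
  fun a b hab => (s.orderIsoOfFin rfl).injective (Subtype.ext hab)

def idxF (s : Finset (Fin n)) (u : Fin n) (hu : u ∈ s) : Fin s.card :=
  (s.orderIsoOfFin rfl).symm ⟨u, hu⟩

lemma ordF_idxF (s : Finset (Fin n)) (u : Fin n) (hu : u ∈ s) :
    ordF s (idxF s u hu) = u := by
  rw [ordF, idxF, OrderIso.apply_symm_apply]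

lemma idxF_ordF (s : Finset (Fin n)) (h : Fin s.card) (hm : ordF s h ∈ s) :
    idxF s (ordF s h) hm = h := by
  apply ordF_inj s
  rw [ordF_idxF]

lemma selMat_apply (s : Finset (Fin n)) (h : Fin s.card) (k : Fin n) :
    selMat s h k = if ordF s h = k then 1 else 0 := rfl

lemma sel_mul_apply (s : Finset (Fin n)) (M : Matrix (Fin n) (Fin n) ℝ)
    (h : Fin s.card) (j : Fin n) : (selMat s * M) h j = M (ordF s h) j := by
  rw [Matrix.mul_apply]
  simp [selMat_apply, ite_mul, one_mul, zero_mul]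

lemma sel_conj (s : Finset (Fin n)) (M : Matrix (Fin n) (Fin n) ℝ)
    (h k : Fin s.card) :
    (selMat s * M * (selMat s)ᵀ) h k = M (ordF s h) (ordF s k) := by
  rw [Matrix.mul_apply]
  have : ∀ j, (selMat s * M) h j * (selMat s)ᵀ j k
      = if ordF s k = j then M (ordF s h) j else 0 := by
    intro j
    rw [sel_mul_apply, Matrix.transpose_apply, selMat_apply]
    by_cases hj : ordF s k = j <;> simp [hj]
  rw [Finset.sum_congr rfl (fun j _ => this j)]
  simp

lemma sel_conjT (s : Finset (Fin n)) (M' : Matrix (Fin s.card) (Fin s.card) ℝ)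
    (u w : Fin n) (hu : u ∈ s) (hw : w ∈ s) :
    ((selMat s)ᵀ * M' * selMat s) u w = M' (idxF s u hu) (idxF s w hw) := by
  have e1 : ∀ k, ((selMat s)ᵀ * M') u k = M' (idxF s u hu) k := by
    intro k
    rw [Matrix.mul_apply]
    have : ∀ h, (selMat s)ᵀ u h * M' h k
        = if h = idxF s u hu then M' h k else 0 := by
      intro h
      rw [Matrix.transpose_apply, selMat_apply]
      have hiff : (ordF s h = u) = (h = idxF s u hu) := by
        apply propext
        constructor
        · intro e
          apply ordF_inj s
          rw [e, ordF_idxF]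
        · intro e
          rw [e, ordF_idxF]
      simp only [hiff]
      by_cases hj : h = idxF s u hu <;> simp [hj]
    rw [Finset.sum_congr rfl (fun h _ => this h)]
    simp
  rw [Matrix.mul_apply]
  have : ∀ k, ((selMat s)ᵀ * M') u k * selMat s k w
      = if k = idxF s w hw then M' (idxF s u hu) k else 0 := by
    intro k
    rw [e1 k, selMat_apply]
    have hiff : (ordF s k = w) = (k = idxF s w hw) := by
      apply propext
      constructor
      · intro e
        apply ordF_inj s
        rw [e, ordF_idxF]
      · intro e
        rw [e, ordF_idxF]
    simp only [hiff]
    by_cases hj : k = idxF s w hw <;> simp [hj]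
  rw [Finset.sum_congr rfl (fun k _ => this k)]
  simp

lemma sel_conj_back (s : Finset (Fin n)) (M : Matrix (Fin n) (Fin n) ℝ)
    (u w : Fin n) (hu : u ∈ s) (hw : w ∈ s) :
    ((selMat s)ᵀ * (selMat s * M * (selMat s)ᵀ) * selMat s) u w = M u w := by
  rw [sel_conjT s _ u w hu hw, sel_conj, ordF_idxF, ordF_idxF]

lemma trace_mul_expand (M1 M2 : Matrix (Fin n) (Fin n) ℝ) :
    (M1 * M2).trace = ∑ u, ∑ w, M1 u w * M2 w u := by
  simp [Matrix.trace, Matrix.diag, Matrix.mul_apply]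

def projE (G : SimpleGraph (Fin n)) [DecidableRel G.Adj] (M : Matrix (Fin n) (Fin n) ℝ) :
    Matrix (Fin n) (Fin n) ℝ :=
  Matrix.of fun i j => if i = j ∨ G.Adj i j then M i j else 0

lemma isSymm_apply {A : Matrix (Fin n) (Fin n) ℝ} (h : A.IsSymm) (i j : Fin n) :
    A i j = A j i := by
  have := congrFun (congrFun h j) i
  rw [Matrix.transpose_apply] at this
  exact this

lemma projE_symm (G : SimpleGraph (Fin n)) [DecidableRel G.Adj]
    {M : Matrix (Fin n) (Fin n) ℝ} (hM : ∀ i j, M i j = M j i) : (projE G M).IsSymm := by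
  ext i j
  rw [Matrix.transpose_apply, projE, Matrix.of_apply, Matrix.of_apply]
  have hiff : (j = i ∨ G.Adj j i) = (i = j ∨ G.Adj i j) := by
    apply propext
    constructor
    · rintro (h | h)
      · exact Or.inl h.symm
      · exact Or.inr h.symm
    · rintro (h | h)
      · exact Or.inl h.symm
      · exact Or.inr h.symm
  simp only [hiff]
  rw [hM j i]

lemma projE_sparsity (G : SimpleGraph (Fin n)) [DecidableRel G.Adj]
    (M : Matrix (Fin n) (Fin n) ℝ) : HasSparsity G (projE G M) := by
  intro i j hne hnadj
  rw [projE, Matrix.of_apply, if_neg]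
  rintro (h | h)
  · exact hne h
  · exact hnadj h

lemma projE_apply_of (G : SimpleGraph (Fin n)) [DecidableRel G.Adj]
    (M : Matrix (Fin n) (Fin n) ℝ) {i j : Fin n} (h : i = j ∨ G.Adj i j) :
    projE G M i j = M i j := by
  rw [projE, Matrix.of_apply, if_pos h]

lemma trace_projE (G : SimpleGraph (Fin n)) [DecidableRel G.Adj]
    {A : Matrix (Fin n) (Fin n) ℝ} (hA : HasSparsity G A)
    (M : Matrix (Fin n) (Fin n) ℝ) : (A * projE G M).trace = (A * M).trace := by
  rw [trace_mul_expand, trace_mul_expand]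
  refine Finset.sum_congr rfl fun u _ => Finset.sum_congr rfl fun w _ => ?_
  by_cases h : w = u ∨ G.Adj w u
  · rw [projE_apply_of G M h]
  · push_neg at h
    rw [hA u w (fun e => h.1 e.symm) (fun e => h.2 e.symm)]
    ring


lemma exists_maxclique (G : SimpleGraph (Fin n)) (s : Finset (Fin n))
    (hs : G.IsClique (↑s : Set (Fin n))) :
    ∃ t : Finset (Fin n), IsMaxClique G t ∧ s ⊆ t := by
  classical
  obtain ⟨t, ht, hmax⟩ := Finset.exists_max_image
    ((Finset.univ : Finset (Finset (Fin n))).filter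
      (fun t : Finset (Fin n) => G.IsClique (↑t : Set (Fin n)) ∧ s ⊆ t)) Finset.card
    ⟨s, by simp only [Finset.mem_filter, Finset.mem_univ, true_and]; exact ⟨hs, subset_rfl⟩⟩
  simp only [Finset.mem_filter, Finset.mem_univ, true_and] at ht
  refine ⟨t, ⟨ht.1, ?_⟩, ht.2⟩
  intro t' ht' hsub
  have hmem : t' ∈ (Finset.univ : Finset (Finset (Fin n))).filter
      (fun t : Finset (Fin n) => G.IsClique (↑t : Set (Fin n)) ∧ s ⊆ t) := by
    simp only [Finset.mem_filter, Finset.mem_univ, true_and]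
    exact ⟨ht', ht.2.trans hsub⟩
  exact Finset.eq_of_subset_of_card_le hsub (hmax t' hmem)


lemma ordF_def (s : Finset (Fin n)) (h : Fin s.card) :
    ordF s h = ((((s.orderIsoOfFin rfl).toEquiv h : s) : Fin n)) := rfl

end Sel

/-- (Clique-tree conversion preserves the SDP.) For a chordal graph `G` whose
cliques are `C_1, …, C_N`, and data matrices with sparsity pattern `G` that are
decomposed over the cliques, the objective values achieved by the original SDP
and by its clique-tree decomposition coincide; in particular the two problems
have the same optimal value. -/
theorem clique_tree_conversion_preserves_sdp {n N m : ℕ}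
    (G : SimpleGraph (Fin n)) (hG : IsChordal G)
    (Cs : Fin N → Finset (Fin n))
    (hcl : ∀ i, IsMaxClique G (Cs i))
    (hall : ∀ s : Finset (Fin n), IsMaxClique G s → ∃ i, Cs i = s)
    (hcover : ∀ h k : Fin n, (h = k ∨ G.Adj h k) → ∃ i, h ∈ Cs i ∧ k ∈ Cs i)
    (C : Matrix (Fin n) (Fin n) ℝ) (hCsymm : C.IsSymm) (hCsp : HasSparsity G C)
    (A : Fin m → Matrix (Fin n) (Fin n) ℝ)
    (hAsymm : ∀ k, (A k).IsSymm) (hAsp : ∀ k, HasSparsity G (A k))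
    (b : Fin m → ℝ)
    (Ci : (i : Fin N) → Matrix (Fin (Cs i).card) (Fin (Cs i).card) ℝ)
    (hCisymm : ∀ i, (Ci i).IsSymm)
    (Aki : (k : Fin m) → (i : Fin N) → Matrix (Fin (Cs i).card) (Fin (Cs i).card) ℝ)
    (hAkisymm : ∀ k i, (Aki k i).IsSymm)
    (hCdec : ∀ Q : Matrix (Fin n) (Fin n) ℝ, Q.IsSymm → HasSparsity G Q →
      (C * Q).trace = ∑ i, (Ci i * (selMat (Cs i) * Q * (selMat (Cs i))ᵀ)).trace)
    (hAdec : ∀ (k : Fin m) (Q : Matrix (Fin n) (Fin n) ℝ), Q.IsSymm → HasSparsity G Q →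
      (A k * Q).trace = ∑ i, (Aki k i * (selMat (Cs i) * Q * (selMat (Cs i))ᵀ)).trace) :
    {r : ℝ | ∃ X : Matrix (Fin n) (Fin n) ℝ, X.PosSemidef ∧
        (∀ k, (A k * X).trace = b k) ∧ r = (C * X).trace} =
    {r : ℝ | ∃ Xi : (i : Fin N) → Matrix (Fin (Cs i).card) (Fin (Cs i).card) ℝ,
        (∀ i, (Xi i).PosSemidef) ∧
        (∀ k, ∑ i, (Aki k i * Xi i).trace = b k) ∧
        (∀ i j : Fin N,
          selMat (Cs i ∩ Cs j) *
            ((selMat (Cs i))ᵀ * Xi i * selMat (Cs i) -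
              (selMat (Cs j))ᵀ * Xi j * selMat (Cs j)) *
            (selMat (Cs i ∩ Cs j))ᵀ = 0) ∧
        r = ∑ i, (Ci i * Xi i).trace} := by
  classical
  ext r
  simp only [Set.mem_setOf_eq]
  constructor
  · -- easy direction: restrict a PSD solution to the cliques
    rintro ⟨X, hXpsd, hXA, rfl⟩
    have hXsym : ∀ i j, X i j = X j i := by
      intro i j
      have := hXpsd.1.apply j i
      rwa [star_trivial] at this
    set Q := projE G X with hQdef
    have hQsymm : Q.IsSymm := projE_symm G hXsym
    have hQsp : HasSparsity G Q := projE_sparsity G X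
    have hselQX : ∀ i : Fin N,
        selMat (Cs i) * Q * (selMat (Cs i))ᵀ = selMat (Cs i) * X * (selMat (Cs i))ᵀ := by
      intro i
      ext h k
      rw [sel_conj, sel_conj, hQdef]
      apply projE_apply_of
      by_cases he : ordF (Cs i) h = ordF (Cs i) k
      · exact Or.inl he
      · exact Or.inr ((hcl i).1 (Finset.mem_coe.2 (ordF_mem _ h))
          (Finset.mem_coe.2 (ordF_mem _ k)) he)
    refine ⟨fun i => selMat (Cs i) * X * (selMat (Cs i))ᵀ, ?_, ?_, ?_, ?_⟩
    · intro i
      show (selMat (Cs i) * X * (selMat (Cs i))ᵀ).PosSemidef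
      have hct : (selMat (Cs i))ᵀ = (selMat (Cs i))ᴴ := by
        ext a c
        rw [Matrix.conjTranspose_apply, Matrix.transpose_apply]
        exact (star_trivial _).symm
      rw [hct]
      exact hXpsd.mul_mul_conjTranspose_same _
    · intro k
      have h1 := hAdec k Q hQsymm hQsp
      have h2 : (A k * Q).trace = (A k * X).trace := trace_projE G (hAsp k) X
      calc ∑ i, (Aki k i * (selMat (Cs i) * X * (selMat (Cs i))ᵀ)).trace
          = ∑ i, (Aki k i * (selMat (Cs i) * Q * (selMat (Cs i))ᵀ)).trace :=
            Finset.sum_congr rfl (fun i _ => by rw [hselQX i])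
        _ = (A k * Q).trace := h1.symm
        _ = (A k * X).trace := h2
        _ = b k := hXA k
    · intro i j
      ext h k
      rw [sel_conj, Matrix.sub_apply]
      have hu := ordF_mem (Cs i ∩ Cs j) h
      have hw := ordF_mem (Cs i ∩ Cs j) k
      rw [sel_conj_back (Cs i) X _ _ (Finset.mem_inter.1 hu).1 (Finset.mem_inter.1 hw).1,
        sel_conj_back (Cs j) X _ _ (Finset.mem_inter.1 hu).2 (Finset.mem_inter.1 hw).2]
      rw [Matrix.zero_apply, sub_self]
    · calc (C * X).trace = (C * Q).trace := (trace_projE G hCsp X).symm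
        _ = ∑ i, (Ci i * (selMat (Cs i) * Q * (selMat (Cs i))ᵀ)).trace :=
            hCdec Q hQsymm hQsp
        _ = ∑ i, (Ci i * (selMat (Cs i) * X * (selMat (Cs i))ᵀ)).trace :=
            Finset.sum_congr rfl (fun i _ => by rw [hselQX i])
  · -- hard direction: complete the clique data to a PSD matrix
    rintro ⟨Xi, hXipsd, hXib, hXiconsist, rfl⟩
    have hXisym : ∀ (i : Fin N) (a c : Fin (Cs i).card), Xi i a c = Xi i c a := by
      intro i a c
      have := (hXipsd i).1.apply c a
      rwa [star_trivial] at this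
    -- consistency of the clique data
    have hcons : ∀ (i j : Fin N) (u w : Fin n) (hui : u ∈ Cs i) (hwi : w ∈ Cs i)
        (huj : u ∈ Cs j) (hwj : w ∈ Cs j),
        Xi i (idxF (Cs i) u hui) (idxF (Cs i) w hwi)
          = Xi j (idxF (Cs j) u huj) (idxF (Cs j) w hwj) := by
      intro i j u w hui hwi huj hwj
      have hu2 : u ∈ Cs i ∩ Cs j := Finset.mem_inter.2 ⟨hui, huj⟩
      have hw2 : w ∈ Cs i ∩ Cs j := Finset.mem_inter.2 ⟨hwi, hwj⟩
      have h1 := congrFun (congrFun (hXiconsist i j) (idxF _ u hu2)) (idxF _ w hw2)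
      rw [sel_conj, ordF_idxF, ordF_idxF, Matrix.sub_apply,
        sel_conjT (Cs i) (Xi i) u w hui hwi, sel_conjT (Cs j) (Xi j) u w huj hwj,
        Matrix.zero_apply] at h1
      exact sub_eq_zero.1 h1
    -- the partial matrix
    set f : Matrix (Fin n) (Fin n) ℝ := Matrix.of (fun u w =>
      if h : ∃ i, u ∈ Cs i ∧ w ∈ Cs i then
        Xi h.choose (idxF (Cs h.choose) u h.choose_spec.1)
          (idxF (Cs h.choose) w h.choose_spec.2)
      else 0) with hfdef
    have hf_eq : ∀ (i : Fin N) (u w : Fin n) (hu : u ∈ Cs i) (hw : w ∈ Cs i),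
        f u w = Xi i (idxF (Cs i) u hu) (idxF (Cs i) w hw) := by
      intro i u w hu hw
      have hex : ∃ j, u ∈ Cs j ∧ w ∈ Cs j := ⟨i, hu, hw⟩
      rw [hfdef]
      simp only [Matrix.of_apply]
      rw [dif_pos hex]
      exact hcons hex.choose i u w hex.choose_spec.1 hex.choose_spec.2 hu hw
    have hfsymm : ∀ u w, f u w = f w u := by
      intro u w
      by_cases hex : ∃ i, u ∈ Cs i ∧ w ∈ Cs i
      · obtain ⟨i, hu, hw⟩ := hex
        rw [hf_eq i u w hu hw, hf_eq i w u hw hu, hXisym]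
      · have hex' : ¬ ∃ i, w ∈ Cs i ∧ u ∈ Cs i := fun ⟨i, h1, h2⟩ => hex ⟨i, h2, h1⟩
        rw [hfdef]
        simp only [Matrix.of_apply]
        rw [dif_neg hex, dif_neg hex']
    -- clique-support quadratic forms are nonnegative
    have hsum_clique : ∀ (i : Fin N) (g : Fin n → ℝ), (∀ u, u ∉ Cs i → g u = 0) →
        ∑ u, g u = ∑ h : Fin (Cs i).card, g (ordF (Cs i) h) := by
      intro i g hg
      rw [← Finset.sum_subset (Finset.subset_univ (Cs i)) (fun u _ hu => hg u hu)]
      rw [← Finset.sum_coe_sort (Cs i) g,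
        ← Equiv.sum_comp ((Cs i).orderIsoOfFin rfl).toEquiv (fun u => g u.1)]
      exact Finset.sum_congr rfl fun h _ => by rw [ordF_def]
    have hfpsd : ∀ x : Fin n → ℝ, ({u | x u ≠ 0}).Pairwise G.Adj →
        0 ≤ x ⬝ᵥ (f *ᵥ x) := by
      intro x hx
      set sF : Finset (Fin n) := Finset.univ.filter (fun u => x u ≠ 0) with hsFdef
      have hsF : G.IsClique (↑sF : Set (Fin n)) := by
        intro a ha c hc hac
        have ha' : x a ≠ 0 := by
          have := Finset.mem_coe.1 ha
          rw [hsFdef, Finset.mem_filter] at this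
          exact this.2
        have hc' : x c ≠ 0 := by
          have := Finset.mem_coe.1 hc
          rw [hsFdef, Finset.mem_filter] at this
          exact this.2
        exact hx ha' hc' hac
      obtain ⟨t, htmax, hst⟩ := exists_maxclique G sF hsF
      obtain ⟨i, hi⟩ := hall t htmax
      have hsupp : ∀ u, x u ≠ 0 → u ∈ Cs i := by
        intro u hu
        rw [hi]
        exact hst (Finset.mem_filter.2 ⟨Finset.mem_univ _, hu⟩)
      have hxu : ∀ u, u ∉ Cs i → x u = 0 :=
        fun u hu => Classical.byContradiction fun h0 => hu (hsupp u h0)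
      set xt : Fin (Cs i).card → ℝ := fun h => x (ordF (Cs i) h) with hxt
      have hQxy : x ⬝ᵥ (f *ᵥ x) = xt ⬝ᵥ (Xi i *ᵥ xt) := by
        rw [dot_expand, dot_expand]
        rw [hsum_clique i (fun u => ∑ w, x u * f u w * x w)
          (fun u hu => Finset.sum_eq_zero fun w _ => by rw [hxu u hu]; ring)]
        refine Finset.sum_congr rfl fun h _ => ?_
        rw [hsum_clique i (fun w => x (ordF (Cs i) h) * f (ordF (Cs i) h) w * x w)
          (fun w hw => by
            show x (ordF (Cs i) h) * f (ordF (Cs i) h) w * x w = 0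
            rw [hxu w hw]; ring)]
        refine Finset.sum_congr rfl fun k _ => ?_
        rw [hf_eq i _ _ (ordF_mem _ h) (ordF_mem _ k), idxF_ordF, idxF_ordF]
      rw [hQxy]
      have := (hXipsd i).dotProduct_mulVec_nonneg xt
      rwa [show star xt = xt from funext fun a => star_trivial _] at this
    -- chordal completion
    have hchord : Chordal' G := hG
    obtain ⟨X, hXpsd, hXpat⟩ := completion n (Fin n) G (le_of_eq (Fintype.card_fin n))
      hchord f hfsymm hfpsd
    have hXsym : ∀ i j, X i j = X j i := by
      intro i j
      have := hXpsd.1.apply j i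
      rwa [star_trivial] at this
    have hselX : ∀ i : Fin N,
        selMat (Cs i) * projE G X * (selMat (Cs i))ᵀ = Xi i := by
      intro i
      ext h k
      have hcond : ordF (Cs i) h = ordF (Cs i) k ∨ G.Adj (ordF (Cs i) h) (ordF (Cs i) k) := by
        by_cases he : ordF (Cs i) h = ordF (Cs i) k
        · exact Or.inl he
        · exact Or.inr ((hcl i).1 (Finset.mem_coe.2 (ordF_mem _ h))
            (Finset.mem_coe.2 (ordF_mem _ k)) he)
      rw [sel_conj, projE_apply_of G X hcond, hXpat _ _ hcond,
        hf_eq i _ _ (ordF_mem _ h) (ordF_mem _ k), idxF_ordF, idxF_ordF]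
    refine ⟨X, hXpsd, ?_, ?_⟩
    · intro k
      have h1 := hAdec k (projE G X) (projE_symm G hXsym) (projE_sparsity G X)
      have h2 : (A k * projE G X).trace = (A k * X).trace := trace_projE G (hAsp k) X
      rw [← h2, h1]
      rw [Finset.sum_congr rfl (fun i _ => by rw [hselX i])]
      exact hXib k
    · rw [← trace_projE G hCsp X,
        hCdec (projE G X) (projE_symm G hXsym) (projE_sparsity G X)]
      exact Finset.sum_congr rfl fun i _ => by rw [hselX i]
end
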